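/- With n duplicate operator copies, each initialized with thresholds θ = Θ/(2n), l = L/(2n), γ = Γ/(2n) and halving its own thresholds after each of its failures, the total accumulated state divergence over all copies and all failures is at most Θ + L·α, and the total number of lost output items is at most Γ + L·β, independent of the number of copies n and the number of failures. -/

import Mathlib

open Finset

lemma half_pow_sum (k : ℕ) : ∑ i ∈ Finset.range k, ((1:ℝ)/2)^(i+1) = 1 - (1/2)^k := by
  induction k with
  | zero => simp
  | succ k ih => rw [Finset.sum_range_succ, ih, pow_succ]; ring

lemma aux_sum (C : ℝ) (hC : 0 ≤ C) (n : ℕ) (hn : 1 ≤ n) (k : ℕ) :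
    ∑ i ∈ Finset.range k, C / (2 ^ (i + 1) * (n : ℝ)) ≤ C / n := by
  have hn' : (0:ℝ) < n := by exact_mod_cast hn
  have heq : ∀ i : ℕ, C / (2 ^ (i + 1) * (n : ℝ)) = (C / n) * (1/2)^(i+1) := by
    intro i
    rw [div_pow, one_pow]
    field_simp
  calc ∑ i ∈ Finset.range k, C / (2 ^ (i + 1) * (n : ℝ))
      = (C / n) * ∑ i ∈ Finset.range k, ((1:ℝ)/2)^(i+1) := by
        rw [Finset.mul_sum]; exact Finset.sum_congr rfl fun i _ => heq i
    _ = (C / n) * (1 - (1/2)^k) := by rw [half_pow_sum]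
    _ ≤ (C / n) * 1 := by
        apply mul_le_mul_of_nonneg_left _ (by positivity)
        have : (0:ℝ) ≤ (1/2)^k := by positivity
        linarith
    _ = C / n := mul_one _

theorem duplicate_copies_bound
    (Θ L Γ α β : ℝ) (hΘ : 0 ≤ Θ) (hL : 0 ≤ L) (hΓ : 0 ≤ Γ)
    (hα : 0 ≤ α) (hβ : 0 ≤ β)
    (n : ℕ) (hn : 1 ≤ n) (k : Fin n → ℕ) :
    (∑ j : Fin n, ∑ i ∈ Finset.range (k j),
        (Θ / (2 ^ (i + 1) * (n : ℝ)) + (L / (2 ^ (i + 1) * (n : ℝ))) * α)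
      ≤ Θ + L * α) ∧
    (∑ j : Fin n, ∑ i ∈ Finset.range (k j),
        (Γ / (2 ^ (i + 1) * (n : ℝ)) + (L / (2 ^ (i + 1) * (n : ℝ))) * β)
      ≤ Γ + L * β) := by
  have hn' : (0:ℝ) < n := by exact_mod_cast hn
  have key : ∀ (A B : ℝ), 0 ≤ A → 0 ≤ B →
      ∑ j : Fin n, ∑ i ∈ Finset.range (k j),
        (A / (2 ^ (i + 1) * (n : ℝ)) + (L / (2 ^ (i + 1) * (n : ℝ))) * B)
      ≤ A + L * B := by
    intro A B hA hB
    have hinner : ∀ j : Fin n,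
        ∑ i ∈ Finset.range (k j),
          (A / (2 ^ (i + 1) * (n : ℝ)) + (L / (2 ^ (i + 1) * (n : ℝ))) * B)
        ≤ (A + L * B) / n := by
      intro j
      have h1 := aux_sum A hA n hn (k j)
      have h2 := aux_sum (L * B) (by positivity) n hn (k j)
      have heq : ∀ i : ℕ,
          A / (2 ^ (i + 1) * (n : ℝ)) + (L / (2 ^ (i + 1) * (n : ℝ))) * B
          = A / (2 ^ (i + 1) * (n : ℝ)) + (L * B) / (2 ^ (i + 1) * (n : ℝ)) := by
        intro i; ring
      calc ∑ i ∈ Finset.range (k j),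
            (A / (2 ^ (i + 1) * (n : ℝ)) + (L / (2 ^ (i + 1) * (n : ℝ))) * B)
          = (∑ i ∈ Finset.range (k j), A / (2 ^ (i + 1) * (n : ℝ)))
            + ∑ i ∈ Finset.range (k j), (L * B) / (2 ^ (i + 1) * (n : ℝ)) := by
            rw [← Finset.sum_add_distrib]
            exact Finset.sum_congr rfl fun i _ => heq i
        _ ≤ A / n + (L * B) / n := add_le_add h1 h2
        _ = (A + L * B) / n := by ring
    calc ∑ j : Fin n, ∑ i ∈ Finset.range (k j),
          (A / (2 ^ (i + 1) * (n : ℝ)) + (L / (2 ^ (i + 1) * (n : ℝ))) * B)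
        ≤ ∑ _j : Fin n, (A + L * B) / n := Finset.sum_le_sum fun j _ => hinner j
      _ = n * ((A + L * B) / n) := by rw [Finset.sum_const, Finset.card_univ,
            Fintype.card_fin, nsmul_eq_mul]
      _ = A + L * B := by field_simp
  exact ⟨key Θ α hΘ hα, key Γ β hΓ hβ⟩
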